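/- Let d ≥ 1, let ρ > 0 and γ > 0 satisfy γρ < 1, and let g : ℝ^d → ℝ be ρ-weakly convex. Then the proximal operator Prox_{γg} : ℝ^d → ℝ^d is Lipschitz continuous with Lipschitz constant 1/(1 − γρ); that is, ‖Prox_{γg}(x) − Prox_{γg}(x′)‖ ≤ (1/(1 − γρ))‖x − x′‖ for all x, x′ ∈ ℝ^d. -/

import Mathlib

open scoped RealInnerProductSpace

set_option maxHeartbeats 1000000

private lemma expand_sub' {E : Type*} [NormedAddCommGroup E] [InnerProductSpace ℝ E]
    (u v : E) (t : ℝ) :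
    ‖u - t • v‖ ^ 2 = ‖u‖ ^ 2 - 2 * t * ⟪u, v⟫ + t ^ 2 * ‖v‖ ^ 2 := by
  rw [norm_sub_sq_real, norm_smul, real_inner_smul_right, mul_pow]
  simp [sq_abs, Real.norm_eq_abs]
  ring

private lemma expand_add' {E : Type*} [NormedAddCommGroup E] [InnerProductSpace ℝ E]
    (u v : E) (t : ℝ) :
    ‖u + t • v‖ ^ 2 = ‖u‖ ^ 2 + 2 * t * ⟪u, v⟫ + t ^ 2 * ‖v‖ ^ 2 := by
  rw [norm_add_sq_real, norm_smul, real_inner_smul_right, mul_pow]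
  simp [sq_abs, Real.norm_eq_abs]
  ring

/-- For `g` ρ-weakly convex with `γρ < 1`, the proximal operator is
Lipschitz with constant `1/(1 − γρ)`. -/
theorem prox_lipschitz (d : ℕ) (hd : 1 ≤ d) (ρ γ : ℝ)
    (hρ : 0 < ρ) (hγ : 0 < γ) (hγρ : γ * ρ < 1)
    (g : EuclideanSpace ℝ (Fin d) → ℝ)
    (hweak : ConvexOn ℝ Set.univ (fun x => g x + ρ / 2 * ‖x‖ ^ 2))
    (prox : EuclideanSpace ℝ (Fin d) → EuclideanSpace ℝ (Fin d))
    (hprox : ∀ x y : EuclideanSpace ℝ (Fin d),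
      1 / (2 * γ) * ‖x - prox x‖ ^ 2 + g (prox x)
        ≤ 1 / (2 * γ) * ‖x - y‖ ^ 2 + g y) :
    ∀ x x' : EuclideanSpace ℝ (Fin d),
      ‖prox x - prox x'‖ ≤ 1 / (1 - γ * ρ) * ‖x - x'‖ := by
  intro x x'
  set p := prox x with hp
  set q := prox x' with hq
  have hC : 0 < 1 - γ * ρ := by linarith
  by_cases hpq : p = q
  · rw [hpq, sub_self, norm_zero]
    positivity
  have hD : 0 < ‖q - p‖ := by
    rw [norm_pos_iff, sub_ne_zero]
    exact fun h => hpq h.symm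
  -- key per-t inequality
  have key : ∀ t : ℝ, 0 < t → t ≤ 1 →
      (1 - t) * (1 - γ * ρ) * ‖q - p‖ ^ 2 ≤ ⟪x - x', p - q⟫ := by
    intro t ht ht1
    have hm1 : (1 - t) • p + t • q = p + t • (q - p) := by module
    have hm2 : (1 - t) • q + t • p = q + t • (p - q) := by module
    have h1 := hprox x (p + t • (q - p))
    have h2 := hprox x' (q + t • (p - q))
    rw [← hp] at h1
    rw [← hq] at h2
    have hc1 := hweak.2 (Set.mem_univ p) (Set.mem_univ q)
      (sub_nonneg.mpr ht1) ht.le (by ring)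
    have hc2 := hweak.2 (Set.mem_univ q) (Set.mem_univ p)
      (sub_nonneg.mpr ht1) ht.le (by ring)
    rw [hm1] at hc1
    rw [hm2] at hc2
    simp only [smul_eq_mul] at hc1 hc2
    have e1 : ‖x - (p + t • (q - p))‖ ^ 2
        = ‖x - p‖ ^ 2 - 2 * t * ⟪x - p, q - p⟫ + t ^ 2 * ‖q - p‖ ^ 2 := by
      rw [show x - (p + t • (q - p)) = (x - p) - t • (q - p) by abel, expand_sub']
    have e2 : ‖p + t • (q - p)‖ ^ 2
        = ‖p‖ ^ 2 + 2 * t * ⟪p, q - p⟫ + t ^ 2 * ‖q - p‖ ^ 2 := expand_add' p (q - p) t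
    have hb : ⟪x' - q, p - q⟫
        = ⟪x - x', q - p⟫ + ‖q - p‖ ^ 2 - ⟪x - p, q - p⟫ := by
      simp only [← real_inner_self_eq_norm_sq, inner_sub_left, inner_sub_right]
      ring
    have hb2 : ⟪q, p - q⟫ = -‖q - p‖ ^ 2 - ⟪p, q - p⟫ := by
      simp only [← real_inner_self_eq_norm_sq, inner_sub_left, inner_sub_right]
      ring
    have e3 : ‖x' - (q + t • (p - q))‖ ^ 2
        = ‖x' - q‖ ^ 2
          - 2 * t * (⟪x - x', q - p⟫ + ‖q - p‖ ^ 2 - ⟪x - p, q - p⟫)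
          + t ^ 2 * ‖q - p‖ ^ 2 := by
      rw [show x' - (q + t • (p - q)) = (x' - q) - t • (p - q) by abel, expand_sub',
        hb, norm_sub_rev p q]
    have e4 : ‖q + t • (p - q)‖ ^ 2
        = ‖q‖ ^ 2 + 2 * t * (-‖q - p‖ ^ 2 - ⟪p, q - p⟫) + t ^ 2 * ‖q - p‖ ^ 2 := by
      rw [expand_add', hb2, norm_sub_rev p q]
    rw [e1] at h1
    rw [e3] at h2
    rw [e2] at hc1
    rw [e4] at hc2
    have hγ0 : γ ≠ 0 := ne_of_gt hγ
    have h1' : γ * (1 / (2 * γ) * ‖x - p‖ ^ 2)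
        ≤ γ * (1 / (2 * γ) * (‖x - p‖ ^ 2 - 2 * t * ⟪x - p, q - p⟫ + t ^ 2 * ‖q - p‖ ^ 2))
          + γ * (g (p + t • (q - p)) - g p) :=
      by nlinarith [mul_le_mul_of_nonneg_left h1 hγ.le]
    have h1'' : (1:ℝ)/2 * ‖x - p‖ ^ 2
        ≤ 1/2 * (‖x - p‖ ^ 2 - 2 * t * ⟪x - p, q - p⟫ + t ^ 2 * ‖q - p‖ ^ 2)
          + γ * (g (p + t • (q - p)) - g p) := by
      rw [show γ * (1 / (2 * γ) * ‖x - p‖ ^ 2) = 1/2 * ‖x - p‖ ^ 2 by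
            field_simp,
          show γ * (1 / (2 * γ) * (‖x - p‖ ^ 2 - 2 * t * ⟪x - p, q - p⟫ + t ^ 2 * ‖q - p‖ ^ 2))
              = 1/2 * (‖x - p‖ ^ 2 - 2 * t * ⟪x - p, q - p⟫ + t ^ 2 * ‖q - p‖ ^ 2) by
            field_simp] at h1'
      exact h1'
    have h2' : γ * (1 / (2 * γ) * ‖x' - q‖ ^ 2)
        ≤ γ * (1 / (2 * γ) * (‖x' - q‖ ^ 2
            - 2 * t * (⟪x - x', q - p⟫ + ‖q - p‖ ^ 2 - ⟪x - p, q - p⟫)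
            + t ^ 2 * ‖q - p‖ ^ 2))
          + γ * (g (q + t • (p - q)) - g q) :=
      by nlinarith [mul_le_mul_of_nonneg_left h2 hγ.le]
    have h2'' : (1:ℝ)/2 * ‖x' - q‖ ^ 2
        ≤ 1/2 * (‖x' - q‖ ^ 2
            - 2 * t * (⟪x - x', q - p⟫ + ‖q - p‖ ^ 2 - ⟪x - p, q - p⟫)
            + t ^ 2 * ‖q - p‖ ^ 2)
          + γ * (g (q + t • (p - q)) - g q) := by
      rw [show γ * (1 / (2 * γ) * ‖x' - q‖ ^ 2) = 1/2 * ‖x' - q‖ ^ 2 by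
            field_simp,
          show γ * (1 / (2 * γ) * (‖x' - q‖ ^ 2
              - 2 * t * (⟪x - x', q - p⟫ + ‖q - p‖ ^ 2 - ⟪x - p, q - p⟫)
              + t ^ 2 * ‖q - p‖ ^ 2))
              = 1/2 * (‖x' - q‖ ^ 2
              - 2 * t * (⟪x - x', q - p⟫ + ‖q - p‖ ^ 2 - ⟪x - p, q - p⟫)
              + t ^ 2 * ‖q - p‖ ^ 2) by
            field_simp] at h2'
      exact h2'
    have hc1' := mul_le_mul_of_nonneg_left hc1 hγ.le
    have hc2' := mul_le_mul_of_nonneg_left hc2 hγ.le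
    have S : 0 ≤ t * (γ * ρ * (1 - t) * ‖q - p‖ ^ 2 + t * ‖q - p‖ ^ 2
        - ‖q - p‖ ^ 2 - ⟪x - x', q - p⟫) := by
      linarith [h1'', h2'', hc1', hc2']
    have hM : 0 ≤ γ * ρ * (1 - t) * ‖q - p‖ ^ 2 + t * ‖q - p‖ ^ 2
        - ‖q - p‖ ^ 2 - ⟪x - x', q - p⟫ := by
      by_contra h
      push_neg at h
      linarith [S, mul_pos ht (neg_pos.mpr h)]
    rw [show p - q = -(q - p) from (neg_sub q p).symm, inner_neg_right]
    linarith
  -- pass to the limit t → 0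
  have hkey0 : (1 - γ * ρ) * ‖q - p‖ ^ 2 ≤ ⟪x - x', p - q⟫ := by
    apply le_of_forall_pos_le_add
    intro ε hε
    have hCN : 0 < (1 - γ * ρ) * ‖q - p‖ ^ 2 := by positivity
    set t : ℝ := min 1 (ε / ((1 - γ * ρ) * ‖q - p‖ ^ 2)) with htdef
    have ht0 : 0 < t := lt_min one_pos (div_pos hε hCN)
    have ht1 : t ≤ 1 := min_le_left _ _
    have htε : t * ((1 - γ * ρ) * ‖q - p‖ ^ 2) ≤ ε := by
      rw [← le_div_iff₀ hCN]
      exact min_le_right _ _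
    have := key t ht0 ht1
    nlinarith [this, htε]
  have hcs : ⟪x - x', p - q⟫ ≤ ‖x - x'‖ * ‖q - p‖ := by
    have := real_inner_le_norm (x - x') (p - q)
    rwa [norm_sub_rev p q] at this
  have h5 : (1 - γ * ρ) * ‖q - p‖ ≤ ‖x - x'‖ := by
    nlinarith [hkey0, hcs, hD]
  rw [norm_sub_rev p q, one_div, inv_mul_eq_div, le_div_iff₀ hC]
  linarith
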